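/- Let G ∈ 𝔗_a and let H ∈ 𝔗_a be reflexive with h_G = h_H, and let σ ∈ 𝓢(G,H). Then ι_σ(P_{i-1},P_i) = 2 for every path P = P_0,…,P_{h_G} of length h_G in G and every 1 ≤ i ≤ h_G; in particular, Σ_{i=1}^{h_G} ι_σ(P_{i-1},P_i) = 2·h_H, and 𝓢(G,H) ⊆ 𝓙^{𝓛(G)}_{G,H}(σ). -/

import Mathlib

/-- A finite digraph: a finite nonempty vertex set `V ⊆ ℕ` together with an
arc set `A ⊆ V × V`. -/
structure Dgraph where
  V : Finset ℕ
  nonempty : V.Nonempty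
  A : Finset (ℕ × ℕ)
  A_sub : ∀ p ∈ A, p.1 ∈ V ∧ p.2 ∈ V

namespace Dgraph

/-- The set of proper arcs of `G`, i.e. the arc set of `G*`. -/
def Astar (G : Dgraph) : Finset (ℕ × ℕ) := G.A.filter (fun p => p.1 ≠ p.2)

/-- `G` is reflexive. -/
def IsRefl (G : Dgraph) : Prop := ∀ v ∈ G.V, (v, v) ∈ G.A

/-- `p` is a path in `G` (a nonempty list of pairwise distinct vertices,
consecutive ones joined by arcs).  Its length as a path is `p.length - 1`. -/
def IsPath (G : Dgraph) (p : List ℕ) : Prop :=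
  p ≠ [] ∧ p.Nodup ∧ (∀ v ∈ p, v ∈ G.V) ∧ p.Chain' (fun v w => (v, w) ∈ G.A)

/-- `p` is a path in `G*`. -/
def IsPathStar (G : Dgraph) (p : List ℕ) : Prop :=
  p ≠ [] ∧ p.Nodup ∧ (∀ v ∈ p, v ∈ G.V) ∧ p.Chain' (fun v w => (v, w) ∈ G.A ∧ v ≠ w)

/-- `G*` contains a closed walk. -/
def HasClosedWalkStar (G : Dgraph) : Prop :=
  ∃ p : List ℕ, (∀ v ∈ p, v ∈ G.V) ∧ p.Chain' (fun v w => (v, w) ∈ G.A ∧ v ≠ w) ∧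
    2 ≤ p.length ∧ p.head? = p.getLast?

/-- membership in the class `𝔗ₐ`: `G*` is acyclic. -/
def MemTa (G : Dgraph) : Prop := ¬ G.HasClosedWalkStar

/-- The height of `G`: the maximal length of a path in `G`. -/
noncomputable def height (G : Dgraph) : ℕ :=
  sSup {n | ∃ p, G.IsPath p ∧ p.length = n + 1}

/-- The interval `[v,w]_G`. -/
def interval (G : Dgraph) (v w : ℕ) : Finset ℕ :=
  G.V.filter (fun z => (v, z) ∈ G.A ∧ (z, w) ∈ G.A)

/-- `ι(v,w)_G`, the cardinality of the interval `[v,w]_G`. -/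
def iota (G : Dgraph) (v w : ℕ) : ℕ := (G.interval v w).card

/-- The set `𝓗(G,H)` of homomorphisms from `G` to `H` (represented as total
maps `ℕ → ℕ`, normalized to `0` outside of `V(G)`). -/
def Hom (G H : Dgraph) : Set (ℕ → ℕ) :=
  {f | (∀ v ∈ G.V, f v ∈ H.V) ∧ (∀ p ∈ G.A, (f p.1, f p.2) ∈ H.A) ∧
    ∀ v, v ∉ G.V → f v = 0}

/-- The set `𝓢(G,H)` of strict homomorphisms from `G` to `H`. -/
def SHom (G H : Dgraph) : Set (ℕ → ℕ) :=
  {f ∈ Hom G H | ∀ p ∈ G.Astar, f p.1 ≠ f p.2}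

/-- `μ_ξ(G)`, for a homomorphism `ξ` from `G` into `H`. -/
def mu (G H : Dgraph) (f : ℕ → ℕ) : ℕ :=
  ∑ p ∈ G.Astar, H.iota (f p.1) (f p.2)

/-- `L` is a subgraph of `G`. -/
def Subgraph (L G : Dgraph) : Prop := L.V ⊆ G.V ∧ L.A ⊆ G.A

/-- Restriction of a map to a vertex set (normalized to `0` outside). -/
def restrict (X : Finset ℕ) (f : ℕ → ℕ) : ℕ → ℕ := fun x => if x ∈ X then f x else 0

/-- `𝓜(L,H)`: homomorphisms from `L` to `H` with maximal `μ`. -/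
def MSet (L H : Dgraph) : Set (ℕ → ℕ) :=
  {f ∈ Hom L H | ∀ g ∈ Hom L H, mu L H g ≤ mu L H f}

/-- `𝓜^𝓛(G,H)`. -/
def MLSet (G H : Dgraph) (𝓛 : Set Dgraph) : Set (ℕ → ℕ) :=
  {f ∈ Hom G H | ∀ L ∈ 𝓛, restrict L.V f ∈ MSet L H}

/-- `𝓙^𝓛_{G,H'}(ξ)` for `ξ ∈ 𝓗(G,H)`. -/
def JSet (G H H' : Dgraph) (𝓛 : Set Dgraph) (ξ : ℕ → ℕ) : Set (ℕ → ℕ) :=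
  {ζ ∈ Hom G H' | ∀ L ∈ 𝓛, ∀ p ∈ L.Astar,
    H'.iota (ζ p.1) (ζ p.2) = H.iota (ξ p.1) (ξ p.2)}

/-- The digraph `P_×` of a path `P = P_0, …, P_ℓ`: vertex set `{P_0,…,P_ℓ}`
and arcs `P_{i-1}P_i`. -/
def pathGraph (P : List ℕ) (h : P ≠ []) : Dgraph where
  V := P.toFinset
  nonempty := by
    obtain ⟨a, t, rfl⟩ := List.exists_cons_of_ne_nil h
    exact ⟨a, by simp⟩
  A := (P.zip P.tail).toFinset
  A_sub := by
    intro p hp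
    rw [List.mem_toFinset] at hp
    have h1 := List.of_mem_zip hp
    exact ⟨List.mem_toFinset.mpr h1.1, List.mem_toFinset.mpr (List.mem_of_mem_tail h1.2)⟩

/-- `𝓛(G)`: the set of the digraphs `P_×` for the paths `P` of length `h_G` in `G`. -/
def LSet (G : Dgraph) : Set Dgraph :=
  {D | ∃ (P : List ℕ) (h : P ≠ []), G.IsPath P ∧ P.length = G.height + 1 ∧
    D = pathGraph P h}

/-- The class `𝕽`: reflexive digraphs `R ∈ 𝔗ₐ` with
`𝓜^{𝓛(R)}(R,R) ∩ 𝓢(R,R) ≠ ∅`. -/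
def MemR (R : Dgraph) : Prop :=
  R.MemTa ∧ R.IsRefl ∧ (MLSet R R (LSet R) ∩ SHom R R).Nonempty

/-- `G` is a poset: reflexive, antisymmetric and transitive. -/
def IsPoset (G : Dgraph) : Prop :=
  G.IsRefl ∧ (∀ v w, (v, w) ∈ G.A → (w, v) ∈ G.A → v = w) ∧
    (∀ u v w, (u, v) ∈ G.A → (v, w) ∈ G.A → (u, w) ∈ G.A)

/-- The class `𝔗ₐ^{=n}`: digraphs in `𝔗ₐ` of height `n` in which every vertex
lies on a path of length `n`. -/
def MemTaEq (n : ℕ) (G : Dgraph) : Prop :=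
  G.MemTa ∧ G.height = n ∧ ∀ v ∈ G.V, ∃ p, G.IsPath p ∧ p.length = n + 1 ∧ v ∈ p

/-- A maximal path in `G`: no path in `G` properly contains its vertex set. -/
def MaximalPath (G : Dgraph) (P : List ℕ) : Prop :=
  G.IsPath P ∧ ∀ Q, G.IsPath Q → (∀ v ∈ P, v ∈ Q) → ∀ v ∈ Q, v ∈ P

end Dgraph


namespace Dgraph

/-- Any path of length `n` witnesses `n ≤ height`. -/
lemma le_height (G : Dgraph) {p : List ℕ} (hp : G.IsPath p) {n : ℕ}
    (hl : p.length = n + 1) : n ≤ G.height := by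
  apply le_csSup
  · refine ⟨G.V.card, ?_⟩
    rintro m ⟨q, hq, hql⟩
    have h1 : q.toFinset.card = q.length := List.toFinset_card_of_nodup hq.2.1
    have h2 : q.toFinset ⊆ G.V := fun v hv => hq.2.2.1 v (List.mem_toFinset.mp hv)
    have h3 := Finset.card_le_card h2
    omega
  · exact ⟨p, hp, hl⟩

/-- In an acyclic digraph, any proper-arc chain has pairwise distinct vertices. -/
lemma chainProper_nodup (H : Dgraph) (hH : H.MemTa) (Q : List ℕ)
    (hV : ∀ v ∈ Q, v ∈ H.V)
    (hc : Q.Chain' (fun v w => (v, w) ∈ H.A ∧ v ≠ w)) : Q.Nodup := by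
  have key : ∀ i j (_ : i < j) (hj : j < Q.length), Q[i]'(by omega) ≠ Q[j] := by
    intro i j hij hj heq
    apply hH
    have hi : i < Q.length := by omega
    have hlw : ((Q.drop i).take (j - i + 1)).length = j - i + 1 := by
      rw [List.length_take, List.length_drop]; omega
    refine ⟨(Q.drop i).take (j - i + 1), ?_, (hc.drop i).take _, by rw [hlw]; omega, ?_⟩
    · intro v hv
      exact hV v (((List.take_sublist _ _).trans (List.drop_sublist _ _)).subset hv)
    · rw [List.head?_eq_getElem?, List.getLast?_eq_getElem?, hlw,
        List.getElem?_eq_getElem (by omega), List.getElem?_eq_getElem (by omega)]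
      have e0 : ((Q.drop i).take (j - i + 1))[0]'(by rw [hlw]; omega) = Q[i] := by
        rw [List.getElem_take, List.getElem_drop]
        simp
      have eJ : ((Q.drop i).take (j - i + 1))[j - i]'(by omega) = Q[j] := by
        rw [List.getElem_take]
        have : (Q.drop i)[j - i]'(by rw [List.length_drop]; omega) = Q[j] := by
          have h1 : (Q.drop i)[j - i]? = Q[i + (j - i)]? := List.getElem?_drop
          have h2 : i + (j - i) = j := by omega
          rw [h2, List.getElem?_eq_getElem (by rw [List.length_drop]; omega),
            List.getElem?_eq_getElem hj] at h1
          exact Option.some.inj h1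
        exact this
      simp only [Nat.add_sub_cancel]
      rw [e0, eJ, heq]
  rw [List.nodup_iff_injective_get]
  rintro ⟨a, ha⟩ ⟨b, hb⟩ hab
  simp only [List.get_eq_getElem] at hab
  rcases Nat.lt_trichotomy a b with h | h | h
  · exact absurd hab (key a b h hb)
  · exact Fin.ext h
  · exact absurd hab.symm (key b a h ha)

/-- Core claim: the image under a strict homomorphism of a consecutive pair on a
maximum-length path has interval of size exactly 2. -/
lemma core (G H : Dgraph) (hH : H.MemTa) (hHr : H.IsRefl)
    (hh : G.height = H.height) (σ : ℕ → ℕ) (hσ : σ ∈ SHom G H)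
    (P : List ℕ) (hP : G.IsPath P) (hlen : P.length = G.height + 1)
    (i : ℕ) (hi : i + 1 < P.length) :
    H.iota (σ (P[i]'(by omega))) (σ (P[i+1]'hi)) = 2 := by
  obtain ⟨⟨hσV, hσA, -⟩, hσs⟩ := hσ
  have hnd : P.Nodup := hP.2.1
  have hPV := hP.2.2.1
  have hPc := hP.2.2.2
  have hParc : ∀ k (hk : k + 1 < P.length), (P[k]'(by omega), P[k+1]'hk) ∈ G.A := by
    unfold List.Chain' at hPc
    rw [List.isChain_iff_getElem] at hPc
    intro k hk
    simpa using hPc k (by omega)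
  have hPne : ∀ k (hk : k + 1 < P.length), P[k]'(by omega) ≠ P[k+1]'hk := by
    intro k hk heq
    have := List.nodup_iff_injective_get.mp hnd
      (a₁ := ⟨k, by omega⟩) (a₂ := ⟨k+1, hk⟩) (by simpa using heq)
    simp at this
  set Q := P.map σ with hQdef
  have hQlen : Q.length = P.length := List.length_map _
  have hQget : ∀ k (hk : k < Q.length), Q[k] = σ (P[k]'(by omega)) := by
    intro k hk; simp [hQdef]
  have hQarc : ∀ k (hk : k + 1 < Q.length),
      (Q[k]'(by omega), Q[k+1]'hk) ∈ H.A ∧ Q[k]'(by omega) ≠ Q[k+1]'hk := by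
    intro k hk
    rw [hQget k (by omega), hQget (k+1) hk]
    have h1 := hParc k (by omega)
    exact ⟨hσA _ h1, hσs _ (Finset.mem_filter.mpr ⟨h1, hPne k (by omega)⟩)⟩
  have hQc : Q.Chain' (fun v w => (v, w) ∈ H.A ∧ v ≠ w) := by
    unfold List.Chain'
    rw [List.isChain_iff_getElem]
    intro k hk
    simpa using hQarc k (by omega)
  have hQV : ∀ v ∈ Q, v ∈ H.V := by
    intro v hv
    obtain ⟨u, hu, rfl⟩ := List.mem_map.mp hv
    exact hσV u (hPV u hu)
  have hQnd := chainProper_nodup H hH Q hQV hQc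
  have hiQ : i + 1 < Q.length := by omega
  have hiQ' : i < Q.length := by omega
  obtain ⟨hArcab, hNeab⟩ := hQarc i hiQ
  have hlast : (Q.take (i+1)).getLast? = some (Q[i]'hiQ') := by
    have hl : (Q.take (i+1)).length = i + 1 := by rw [List.length_take]; omega
    rw [List.getLast?_eq_getElem?, hl]
    simp only [Nat.add_sub_cancel]
    rw [List.getElem?_take, if_pos (by omega), List.getElem?_eq_getElem hiQ']
  have goalshape : H.iota (σ (P[i]'(by omega))) (σ (P[i+1]'hi)) =
      H.iota (Q[i]'hiQ') (Q[i+1]'hiQ) := by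
    rw [hQget i hiQ', hQget (i+1) hiQ]
  rw [goalshape]
  have hz : ∀ z ∈ H.interval (Q[i]'hiQ') (Q[i+1]'hiQ),
      z = Q[i]'hiQ' ∨ z = Q[i+1]'hiQ := by
    intro z hzmem
    rw [interval, Finset.mem_filter] at hzmem
    obtain ⟨hzV, hza, hzb⟩ := hzmem
    by_contra hcon
    push_neg at hcon
    obtain ⟨hza', hzb'⟩ := hcon
    have hzQ : z ∉ Q := by
      intro hzQ
      obtain ⟨k, hk, hkz⟩ := List.mem_iff_getElem.mp hzQ
      rcases Nat.lt_trichotomy k i with hki | hki | hki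
      · -- closed walk via Q.take (i+1) ++ [z]
        have hchain : ((Q.take (i+1)) ++ [z]).Chain'
            (fun v w => (v, w) ∈ H.A ∧ v ≠ w) := by
          unfold List.Chain'; rw [List.isChain_append]
          refine ⟨hQc.take _, List.isChain_singleton _, ?_⟩
          intro x hx y hy
          rw [hlast] at hx
          simp only [List.head?_cons, Option.mem_def, Option.some.injEq] at hx hy
          subst hx; subst hy
          exact ⟨hza, fun e => hza' e.symm⟩
        have hnd2 := chainProper_nodup H hH _
          (by
            intro v hv
            rcases List.mem_append.mp hv with h | h
            · exact hQV v (List.mem_of_mem_take h)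
            · simp only [List.mem_singleton] at h; subst h; exact hzV)
          hchain
        rw [List.nodup_append] at hnd2
        refine hnd2.2.2 z ?_ z (List.mem_singleton.mpr rfl) rfl
        refine List.mem_iff_getElem.mpr ⟨k, by rw [List.length_take]; omega, ?_⟩
        rw [List.getElem_take]; exact hkz
      · exact hza' ((hki ▸ hkz :  Q[i]'(hki ▸ hk) = z)).symm
      · rcases Nat.lt_or_ge (i+1) k with hik | hik
        · -- closed walk via z :: Q.drop (i+1)
          have hchain : (z :: Q.drop (i+1)).Chain'
              (fun v w => (v, w) ∈ H.A ∧ v ≠ w) := by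
            unfold List.Chain'; rw [List.isChain_cons]
            refine ⟨?_, hQc.drop _⟩
            intro y hy
            rw [List.head?_drop, List.getElem?_eq_getElem hiQ] at hy
            simp only [Option.mem_def, Option.some.injEq] at hy
            subst hy
            exact ⟨hzb, hzb'⟩
          have hnd2 := chainProper_nodup H hH _
            (by
              intro v hv
              rcases List.mem_cons.mp hv with h | h
              · subst h; exact hzV
              · exact hQV v (List.mem_of_mem_drop h))
            hchain
          rw [List.nodup_cons] at hnd2
          apply hnd2.1
          refine List.mem_iff_getElem?.mpr ⟨k - (i+1), ?_⟩
          rw [List.getElem?_drop]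
          have h2 : i + 1 + (k - (i+1)) = k := by omega
          rw [h2, List.getElem?_eq_getElem hk, hkz]
        · have hk1 : k = i + 1 := by omega
          subst hk1
          exact hzb' hkz.symm
    -- z not on Q: extend the path
    have hext : H.IsPath (Q.take (i+1) ++ z :: Q.drop (i+1)) := by
      refine ⟨by simp, ?_, ?_, ?_⟩
      · have hperm : (Q.take (i+1) ++ z :: Q.drop (i+1)).Perm (z :: Q) := by
          have h := List.perm_middle (a := z) (l₁ := Q.take (i+1)) (l₂ := Q.drop (i+1))
          rwa [List.take_append_drop] at h
        exact hperm.nodup_iff.mpr (List.nodup_cons.mpr ⟨hzQ, hQnd⟩)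
      · intro v hv
        rcases List.mem_append.mp hv with h | h
        · exact hQV v (List.mem_of_mem_take h)
        · rcases List.mem_cons.mp h with h | h
          · subst h; exact hzV
          · exact hQV v (List.mem_of_mem_drop h)
      · unfold List.Chain'; rw [List.isChain_append]
        refine ⟨(hQc.take _).imp (fun a b h => h.1), ?_, ?_⟩
        · rw [List.isChain_cons]
          refine ⟨?_, (hQc.drop _).imp (fun a b h => h.1)⟩
          intro y hy
          rw [List.head?_drop, List.getElem?_eq_getElem hiQ] at hy
          simp only [Option.mem_def, Option.some.injEq] at hy
          subst hy
          exact hzb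
        · intro x hx y hy
          rw [hlast] at hx
          simp only [List.head?_cons, Option.mem_def, Option.some.injEq] at hx hy
          subst hx; subst hy
          exact hza
    have hlen2 : (Q.take (i+1) ++ z :: Q.drop (i+1)).length = (G.height + 1) + 1 := by
      simp only [List.length_append, List.length_take, List.length_cons,
        List.length_drop]
      omega
    have := le_height H hext hlen2
    rw [← hh] at this
    omega
  have hintv : H.interval (Q[i]'hiQ') (Q[i+1]'hiQ) =
      {Q[i]'hiQ', Q[i+1]'hiQ} := by
    apply Finset.Subset.antisymm
    · intro z hzm
      rcases hz z hzm with rfl | rfl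
      · exact Finset.mem_insert_self _ _
      · exact Finset.mem_insert_of_mem (Finset.mem_singleton_self _)
    · intro z hzm
      have haV : Q[i]'hiQ' ∈ H.V := hQV _ (List.getElem_mem hiQ')
      have hbV : Q[i+1]'hiQ ∈ H.V := hQV _ (List.getElem_mem hiQ)
      rw [interval, Finset.mem_filter]
      rcases Finset.mem_insert.mp hzm with rfl | hzm
      · exact ⟨haV, hHr _ haV, hArcab⟩
      · rw [Finset.mem_singleton] at hzm
        subst hzm
        exact ⟨hbV, hArcab, hHr _ hbV⟩
  rw [iota, hintv, Finset.card_pair hNeab]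

end Dgraph

open Dgraph

theorem stmt_17 (G H : Dgraph) (hG : G.MemTa) (hH : H.MemTa) (hHr : H.IsRefl)
    (hh : G.height = H.height) (σ : ℕ → ℕ) (hσ : σ ∈ SHom G H) :
    (∀ P : List ℕ, G.IsPath P → P.length = G.height + 1 →
      ∀ i, i + 1 < P.length →
        H.iota (σ (P.getD i 0)) (σ (P.getD (i + 1) 0)) = 2) ∧
    (∀ P : List ℕ, G.IsPath P → P.length = G.height + 1 →
      ∑ i ∈ Finset.range G.height,
        H.iota (σ (P.getD i 0)) (σ (P.getD (i + 1) 0)) = 2 * H.height) ∧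
    SHom G H ⊆ JSet G H H (LSet G) σ := by
  have part1 : ∀ P : List ℕ, G.IsPath P → P.length = G.height + 1 →
      ∀ i, i + 1 < P.length →
        H.iota (σ (P.getD i 0)) (σ (P.getD (i + 1) 0)) = 2 := by
    intro P hP hlen i hi
    rw [List.getD_eq_getElem _ _ (by omega), List.getD_eq_getElem _ _ hi]
    exact core G H hH hHr hh σ hσ P hP hlen i hi
  refine ⟨part1, ?_, ?_⟩
  · intro P hP hlen
    have h2 : ∀ i ∈ Finset.range G.height,
        H.iota (σ (P.getD i 0)) (σ (P.getD (i+1) 0)) = 2 := by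
      intro i hi
      rw [Finset.mem_range] at hi
      exact part1 P hP hlen i (by omega)
    rw [Finset.sum_congr rfl h2, Finset.sum_const, Finset.card_range,
      smul_eq_mul, hh, mul_comm]
  · intro ζ hζ
    refine ⟨hζ.1, ?_⟩
    rintro L ⟨P, hPne, hP, hlen, rfl⟩ p hp
    rw [Astar, Finset.mem_filter] at hp
    obtain ⟨hpA, hpne⟩ := hp
    have hpz : p ∈ (P.zip P.tail).toFinset := hpA
    rw [List.mem_toFinset, List.mem_iff_getElem] at hpz
    obtain ⟨k, hk, hkp⟩ := hpz
    have hkl : k + 1 < P.length := by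
      rw [List.length_zip, List.length_tail] at hk
      omega
    have hkp' : (P[k]'(by omega), P[k+1]'hkl) = p := by
      rw [List.getElem_zip] at hkp
      rw [← hkp]
      congr 1
      exact (List.getElem_tail (by rw [List.length_tail]; omega)).symm
    subst hkp'
    have e1 := core G H hH hHr hh σ hσ P hP hlen k hkl
    have e2 := core G H hH hHr hh ζ hζ P hP hlen k hkl
    exact e2.trans e1.symm
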